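/- Let τ > 0 and let h : ℝ × ℝ^D × ℝ^D → ℝ be conserved along every solution of the ODE θ̈ + τ θ̇ = 0. Then for all t, θ, v one has h(t, θ, v) = H(θ + v/τ, v·exp(τt)), where H(a, b) := h(0, a − b/τ, b). -/

import Mathlib

/-- Structure theorem (momentum case): if `h (t, θ, v)` is conserved along every solution of
the ODE `θ̈ + τ θ̇ = 0` (with `τ > 0`), then
`h (t, θ, v) = H (θ + v/τ, v · exp (τ t))` where `H (a, b) = h (0, a - b/τ, b)`.
A solution is encoded by a curve `θ` with derivative `dθ` satisfying `dθ' = -τ • dθ`. -/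
theorem stmt1 {D : ℕ} (τ : ℝ) (hτ : 0 < τ)
    (h : ℝ → (Fin D → ℝ) → (Fin D → ℝ) → ℝ)
    (hc : ∀ (θ dθ : ℝ → Fin D → ℝ),
      (∀ t, HasDerivAt θ (dθ t) t) →
      (∀ t, HasDerivAt dθ (-(τ • dθ t)) t) →
      ∀ t s : ℝ, h t (θ t) (dθ t) = h s (θ s) (dθ s)) :
    ∀ (t : ℝ) (θ v : Fin D → ℝ),
      h t θ v =
        h 0 (fun i => (θ i + v i / τ) - (v i * Real.exp (τ * t)) / τ)
          (fun i => v i * Real.exp (τ * t)) := by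
  intro t θ v
  set c : Fin D → ℝ := fun i => v i * Real.exp (τ * t) with hc0
  set Θ : ℝ → Fin D → ℝ := fun s i => (θ i + v i / τ) - c i * Real.exp (-(τ * s)) / τ with hΘ
  set dΘ : ℝ → Fin D → ℝ := fun s i => c i * Real.exp (-(τ * s)) with hdΘ
  have hexp : ∀ s : ℝ, HasDerivAt (fun s : ℝ => Real.exp (-(τ * s))) (-τ * Real.exp (-(τ * s))) s := by
    intro s
    have := (Real.hasDerivAt_exp (-(τ * s))).comp s
      (((hasDerivAt_id s).const_mul τ).neg)
    exact this.congr_deriv (by ring)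
  have h1 : ∀ s, HasDerivAt Θ (dΘ s) s := by
    intro s
    rw [hasDerivAt_pi]
    intro i
    have := (((hexp s).const_mul (c i)).div_const τ).const_sub (θ i + v i / τ)
    have h2 : -(c i * (-τ * Real.exp (-(τ * s))) / τ) = c i * Real.exp (-(τ * s)) := by
      field_simp
    rw [h2] at this
    simpa [Θ, dΘ] using this
  have h2 : ∀ s, HasDerivAt dΘ (-(τ • dΘ s)) s := by
    intro s
    rw [hasDerivAt_pi]
    intro i
    have := (hexp s).const_mul (c i)
    have h3 : c i * (-τ * Real.exp (-(τ * s))) = (-(τ • dΘ s)) i := by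
      simp [dΘ]; ring
    rw [h3] at this
    exact this
  have key := hc Θ dΘ h1 h2 t 0
  have hΘt : Θ t = θ := by
    funext i
    simp only [Θ, c]
    rw [mul_assoc, ← Real.exp_add]
    field_simp
    simp
  have hdΘt : dΘ t = v := by
    funext i
    simp only [dΘ, c]
    rw [mul_assoc, ← Real.exp_add]
    simp
  have hΘ0 : Θ 0 = fun i => (θ i + v i / τ) - (v i * Real.exp (τ * t)) / τ := by
    funext i; simp [Θ, c]
  have hdΘ0 : dΘ 0 = fun i => v i * Real.exp (τ * t) := by
    funext i; simp [dΘ, c]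
  rw [hΘt, hdΘt, hΘ0, hdΘ0] at key
  exact key
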